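/- Let l ≥ 3 and n = 2^l − 1. Then dil(S_n, HT(l)) = l − 1: every bijection from the vertices of the star S_n to the vertices of the hypertree HT(l) has some edge of S_n whose endpoint images are at distance at least l − 1 in HT(l), and there exists a bijection under which every edge of S_n maps to a pair of vertices at distance at most l − 1 in HT(l). -/

import Mathlib

open SimpleGraph

/-- Star graph `K_{1,n-1}` on `Fin n`, centre `0`. -/
def starGraph (n : ℕ) : SimpleGraph (Fin n) where
  Adj x y := x ≠ y ∧ (x.val = 0 ∨ y.val = 0)
  symm := ⟨by rintro x y ⟨h1, h2⟩; exact ⟨h1.symm, by tauto⟩⟩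
  loopless := ⟨by rintro x ⟨h1, -⟩; exact h1 rfl⟩

/-- Adjacency of hypertree labels (1-based): binary tree edges plus horizontal
edges between labels on the same level `i ≥ 2` differing by `2^(i-2)`.
The level of label `a` is `Nat.log 2 a + 1`. -/
def htAdjLbl (a b : ℕ) : Prop :=
  (b = 2 * a ∨ b = 2 * a + 1 ∨ a = 2 * b ∨ a = 2 * b + 1) ∨
  (a ≠ b ∧ Nat.log 2 a = Nat.log 2 b ∧ 1 ≤ Nat.log 2 a ∧
    max a b - min a b = 2 ^ (Nat.log 2 a - 1))

/-- The hypertree `HT(l)` on `Fin (2^l - 1)`; vertex `x` has label `x+1`. -/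
def hypertree (l : ℕ) : SimpleGraph (Fin (2 ^ l - 1)) where
  Adj x y := htAdjLbl (x.val + 1) (y.val + 1)
  symm := ⟨by
    rintro x y (h | ⟨hne, hlog, hge, hdiff⟩)
    · left; tauto
    · right
      refine ⟨hne.symm, hlog.symm, ?_, ?_⟩
      · rw [← hlog]; exact hge
      · rw [max_comm, min_comm, ← hlog]; exact hdiff⟩
  loopless := ⟨by
    rintro x (h | ⟨hne, -⟩)
    · omega
    · exact hne rfl⟩

namespace HTAux

lemma log2_child {a d : ℕ} (ha : 1 ≤ a) (hd : d ≤ 1) :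
    Nat.log 2 (2 * a + d) = Nat.log 2 a + 1 := by
  have h1 : 2 ^ Nat.log 2 a ≤ a := Nat.pow_log_le_self 2 (by omega)
  have h2 : a < 2 ^ (Nat.log 2 a + 1) := Nat.lt_pow_succ_log_self (by norm_num) a
  apply Nat.log_eq_of_pow_le_of_lt_pow
  · rw [pow_succ]; omega
  · rw [pow_succ]; omega

/-- bit just below the leading bit -/
def sg (a : ℕ) : ℕ := a / 2 ^ (Nat.log 2 a - 1) % 2

/-- strip the second-highest bit: `a mod 2^(log a - 1) + 2^(log a - 1)` -/
def strip (a : ℕ) : ℕ := a % 2 ^ (Nat.log 2 a - 1) + 2 ^ (Nat.log 2 a - 1)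

lemma strip_one : strip 1 = 1 := by simp [strip]

lemma strip_pos (a : ℕ) : 1 ≤ strip a := by
  have : 1 ≤ 2 ^ (Nat.log 2 a - 1) := Nat.one_le_two_pow
  simp [strip]; omega

lemma child_mod_div {a d m : ℕ} (hd : d ≤ 1) (hm : 1 ≤ m) :
    (2 * a + d) % 2 ^ m = 2 * (a % 2 ^ (m - 1)) + d ∧
    (2 * a + d) / 2 ^ m = a / 2 ^ (m - 1) := by
  set c := 2 ^ (m - 1) with hc
  have hcpos : 1 ≤ c := Nat.one_le_two_pow
  have hpm : 2 ^ m = 2 * c := by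
    rw [hc, ← pow_succ']
    congr 1; omega
  have hdm := Nat.div_add_mod a c
  set q := a / c; set r := a % c
  have hrlt : r < c := Nat.mod_lt _ (by omega)
  have key : 2 * a + d = (2 * r + d) + (2 * c) * q := by
    have : (2 * c) * q = 2 * (c * q) := by ring
    omega
  constructor
  · rw [hpm, key, Nat.add_mul_mod_self_left, Nat.mod_eq_of_lt (by omega)]
  · rw [hpm, key, Nat.add_mul_div_left _ _ (by omega),
      Nat.div_eq_of_lt (by omega)]
    omega

lemma strip_child {a d : ℕ} (ha : 2 ≤ a) (hd : d ≤ 1) :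
    strip (2 * a + d) = 2 * strip a + d := by
  have hl : 1 ≤ Nat.log 2 a := Nat.log_pos (by norm_num) (by omega)
  have hc : Nat.log 2 (2 * a + d) = Nat.log 2 a + 1 := log2_child (by omega) hd
  rw [strip, strip, hc]
  simp only [Nat.add_sub_cancel]
  have h := (child_mod_div (a := a) (d := d) hd (m := Nat.log 2 a) (by omega)).1
  rw [h, show (2:ℕ) ^ Nat.log 2 a = 2 * 2 ^ (Nat.log 2 a - 1) by
    rw [← pow_succ']; congr 1; omega]
  ring

lemma sg_child {a d : ℕ} (ha : 2 ≤ a) (hd : d ≤ 1) :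
    sg (2 * a + d) = sg a := by
  have hl : 1 ≤ Nat.log 2 a := Nat.log_pos (by norm_num) (by omega)
  have hc : Nat.log 2 (2 * a + d) = Nat.log 2 a + 1 := log2_child (by omega) hd
  rw [sg, sg, hc]
  simp only [Nat.add_sub_cancel]
  have h := (child_mod_div (a := a) (d := d) hd (m := Nat.log 2 a) (by omega)).2
  rw [h]



/-- potential on stripped labels: `|v| + (l-2) - 2*(leading β-run of v)` -/
def Gf (l β x : ℕ) : ℕ :=
  if 2 ≤ x then
    (if x / 2 = 2 ^ Nat.log 2 (x / 2) * (1 + β) - β ∧ x % 2 = β then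
      Gf l β (x / 2) - 1
    else Gf l β (x / 2) + 1)
  else l - 2
termination_by x
decreasing_by all_goals exact Nat.div_lt_self (by omega) one_lt_two

lemma Gf_base (l β x : ℕ) (hx : x ≤ 1) : Gf l β x = l - 2 := by
  rw [Gf]; simp [Nat.not_le.mpr (by omega : x < 2)]

lemma Gf_step (l β p d : ℕ) (hp : 1 ≤ p) (hd : d ≤ 1) :
    Gf l β (2 * p + d) =
      if p = 2 ^ Nat.log 2 p * (1 + β) - β ∧ d = β then Gf l β p - 1
      else Gf l β p + 1 := by
  have h1 : (2 * p + d) / 2 = p := by omega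
  have h2 : (2 * p + d) % 2 = d := by omega
  rw [Gf]
  simp only [h1, h2]
  rw [if_pos (by omega : 2 ≤ 2 * p + d)]

lemma Gf_child_bounds (l β p d : ℕ) (hp : 1 ≤ p) (hd : d ≤ 1) :
    Gf l β (2 * p + d) ≤ Gf l β p + 1 ∧ Gf l β p ≤ Gf l β (2 * p + d) + 1 := by
  rw [Gf_step l β p d hp hd]
  split <;> omega

lemma log2_spine (β j : ℕ) (hβ : β ≤ 1) : Nat.log 2 (2 ^ j * (1 + β) - β) = j := by
  have h1 : (1:ℕ) ≤ 2 ^ j := Nat.one_le_two_pow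
  have h2 : (2:ℕ) ^ (j+1) = 2 * 2 ^ j := by rw [pow_succ]; ring
  interval_cases β <;>
    apply Nat.log_eq_of_pow_le_of_lt_pow <;> omega

lemma Gf_spine (l β j : ℕ) (hβ : β ≤ 1) :
    Gf l β (2 ^ j * (1 + β) - β) = l - 2 - j := by
  induction j with
  | zero => rw [show 2 ^ 0 * (1 + β) - β = 1 by omega, Gf_base l β 1 le_rfl]; omega
  | succ j ih =>
    have h1 : (1:ℕ) ≤ 2 ^ j := Nat.one_le_two_pow
    have h2 : (2:ℕ) ^ (j+1) = 2 * 2 ^ j := by rw [pow_succ]; ring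
    have h3 : (2:ℕ) ^ (j+1+1) = 2 * 2 ^ (j+1) := by rw [pow_succ]; ring
    have hs : 2 ^ (j+1) * (1 + β) - β = 2 * (2 ^ j * (1 + β) - β) + β := by
      interval_cases β <;> omega
    rw [hs, Gf_step l β _ β (by interval_cases β <;> omega) hβ,
      if_pos ⟨by rw [log2_spine β j hβ], rfl⟩, ih]
    omega

lemma spine_bit (β m : ℕ) (hβ : β ≤ 1) (hm : 1 ≤ m) :
    (2 ^ m * (1 + β) - β) / 2 ^ (m - 1) % 2 = β := by
  have hpw : (1:ℕ) ≤ 2 ^ (m-1) := Nat.one_le_two_pow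
  have hsplit : (2:ℕ) ^ m = 2 ^ (m - 1) * 2 := by
    rw [← pow_succ]; congr 1; omega
  interval_cases β
  · rw [show 2 ^ m * (1 + 0) - 0 = 2 ^ (m-1) * 2 by omega,
      Nat.mul_div_cancel_left _ (by omega : 0 < 2 ^ (m-1))]
  · rw [show 2 ^ m * (1 + 1) - 1 = (2 ^ (m-1) - 1) + 3 * 2 ^ (m-1) by omega,
      Nat.add_mul_div_right _ _ (by omega : 0 < 2 ^ (m-1)),
      Nat.div_eq_of_lt (by omega)]

lemma Gf_offspine (l β x : ℕ) (hx : 2 ≤ x) (h : x / 2 ^ (Nat.log 2 x - 1) % 2 ≠ β) :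
    Gf l β x = Nat.log 2 x + (l - 2) := by
  induction x using Nat.strong_induction_on with
  | _ x ih =>
  have hd : x % 2 ≤ 1 := by omega
  have hxe : x = 2 * (x / 2) + x % 2 := by omega
  by_cases hp : x / 2 = 1
  · -- x ∈ {2,3}
    have e1 : (2:ℕ)^1 = 2 := rfl
    have e2 : (2:ℕ)^(1+1) = 4 := rfl
    have hlog : Nat.log 2 x = 1 := Nat.log_eq_of_pow_le_of_lt_pow (by omega) (by omega)
    rw [hlog] at h
    simp only [Nat.sub_self, pow_zero, Nat.div_one] at h
    conv_lhs => rw [hxe]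
    rw [Gf_step l β _ _ (by omega) hd, if_neg (by rintro ⟨-, h2⟩; omega), hp,
      Gf_base l β 1 le_rfl, hlog]
    omega
  · have hp2 : 2 ≤ x / 2 := by omega
    have hlog : Nat.log 2 x = Nat.log 2 (x / 2) + 1 := by
      conv_lhs => rw [hxe]
      exact log2_child (by omega) hd
    have hlp : 1 ≤ Nat.log 2 (x / 2) := Nat.log_pos (by norm_num) (by omega)
    have hbit : x / 2 / 2 ^ (Nat.log 2 (x / 2) - 1) % 2 ≠ β := by
      have : x / 2 ^ (Nat.log 2 x - 1) = x / 2 / 2 ^ (Nat.log 2 (x / 2) - 1) := by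
        rw [hlog, Nat.add_sub_cancel, Nat.div_div_eq_div_mul]
        congr 1
        rw [← pow_succ']
        congr 1
        omega
      rwa [this] at h
    have ihp := ih (x / 2) (by omega) hp2 hbit
    have hns : ¬(x / 2 = 2 ^ Nat.log 2 (x/2) * (1 + β) - β ∧ x % 2 = β) := by
      rintro ⟨h1, h2⟩
      have hβ : β ≤ 1 := by omega
      apply hbit
      rw [h1, log2_spine _ _ hβ]
      exact spine_bit β _ hβ hlp
    conv_lhs => rw [hxe]
    rw [Gf_step l β _ _ (by omega) hd, if_neg hns, ihp, hlog]
    omega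


lemma htAdjLbl_def {a b : ℕ} : htAdjLbl a b ↔
    ((b = 2 * a ∨ b = 2 * a + 1 ∨ a = 2 * b ∨ a = 2 * b + 1) ∨
    (a ≠ b ∧ Nat.log 2 a = Nat.log 2 b ∧ 1 ≤ Nat.log 2 a ∧
      max a b - min a b = 2 ^ (Nat.log 2 a - 1))) := Iff.rfl

/-- side indicator relative to target side τ -/
def chi (τ a : ℕ) : ℕ := if a = 1 then 1 else if sg a = τ then 0 else 1

lemma chi_le_one (τ a : ℕ) : chi τ a ≤ 1 := by
  unfold chi; split <;> [omega; skip]; split <;> omega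

/-- the potential -/
def Phi (l β τ a : ℕ) : ℕ := Gf l β (strip a) + chi τ a

lemma phi_child (l β τ a d : ℕ) (ha : 1 ≤ a) (hd : d ≤ 1) :
    Phi l β τ (2 * a + d) ≤ Phi l β τ a + 1 ∧
      Phi l β τ a ≤ Phi l β τ (2 * a + d) + 1 := by
  rcases Nat.lt_or_ge a 2 with h2 | h2
  · have ha1 : a = 1 := by omega
    subst ha1
    have hlog : Nat.log 2 (2 * 1 + d) = 1 := by
      rw [log2_child le_rfl hd]; simp
    have hstrip : strip (2 * 1 + d) = 1 := by
      rw [strip, hlog]; simp [Nat.mod_one]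
    have hc := chi_le_one τ (2 * 1 + d)
    rw [Phi, Phi, hstrip, strip_one, Gf_base l β 1 le_rfl]
    have : chi τ 1 = 1 := by simp [chi]
    omega
  · have hstrip := strip_child h2 hd
    have hsg := sg_child h2 hd
    have hchi : chi τ (2 * a + d) = chi τ a := by
      rw [chi, chi, if_neg (by omega : ¬ 2 * a + d = 1), if_neg (by omega : ¬ a = 1), hsg]
    have hGf := Gf_child_bounds l β (strip a) d (strip_pos a) hd
    rw [Phi, Phi, hstrip, hchi]
    omega

lemma strip_horiz {a b : ℕ} (ha : 1 ≤ a) (hab : a < b)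
    (hlog : Nat.log 2 a = Nat.log 2 b) (hm : 1 ≤ Nat.log 2 a)
    (hdiff : b - a = 2 ^ (Nat.log 2 a - 1)) : strip a = strip b := by
  set m := Nat.log 2 a with hmd
  set c : ℕ := 2 ^ (m - 1) with hcd
  have hcpos : 1 ≤ c := Nat.one_le_two_pow
  have h2c : (2:ℕ) ^ m = 2 * c := by
    rw [hcd, ← pow_succ']; congr 1; omega
  have hal : 2 ^ m ≤ a := Nat.pow_log_le_self 2 (by omega)
  have hbu : b < 2 ^ (m + 1) := by
    have := Nat.lt_pow_succ_log_self (by norm_num : 1 < 2) b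
    rwa [← hlog] at this
  have h4c : (2:ℕ) ^ (m+1) = 4 * c := by rw [pow_succ, h2c]; ring
  set r : ℕ := a - 2 * c with hrd
  have hra : a = r + c * 2 := by omega
  have hrb : b = r + c * 3 := by omega
  have hrlt : r < c := by omega
  have hma : a % c = r := by rw [hra, Nat.add_mul_mod_self_left, Nat.mod_eq_of_lt hrlt]
  have hmb : b % c = r := by rw [hrb, Nat.add_mul_mod_self_left, Nat.mod_eq_of_lt hrlt]
  rw [strip, strip, ← hlog, ← hmd, ← hcd, hma, hmb]

lemma phi_lip (l β τ : ℕ) {a b : ℕ} (ha : 1 ≤ a) (hb : 1 ≤ b) (h : htAdjLbl a b) :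
    Phi l β τ b ≤ Phi l β τ a + 1 := by
  rcases htAdjLbl_def.mp h with (h1 | h1 | h1 | h1) | ⟨hne, hlog, hm, hdiff⟩
  · exact h1 ▸ (phi_child l β τ a 0 ha (by omega)).1
  · exact h1 ▸ (phi_child l β τ a 1 ha le_rfl).1
  · exact h1 ▸ (phi_child l β τ b 0 hb (by omega)).2
  · exact h1 ▸ (phi_child l β τ b 1 hb le_rfl).2
  · have hs : strip a = strip b := by
      rcases Nat.lt_or_ge a b with hab | hab
      · have : max a b = b ∧ min a b = a := by omega
        exact strip_horiz ha hab hlog hm (by omega)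
      · have hba : b < a := by omega
        have : max a b = a ∧ min a b = b := by omega
        exact (strip_horiz hb hba (by omega) (by rw [← hlog]; exact hm) (by
          rw [← hlog]; omega)).symm
    have h1 := chi_le_one τ b
    rw [Phi, Phi, hs]
    omega

lemma phi_walk (l β τ : ℕ) {x y : Fin (2 ^ l - 1)} (w : (hypertree l).Walk x y) :
    Phi l β τ (x.val + 1) ≤ Phi l β τ (y.val + 1) + w.length := by
  induction w with
  | nil => simp
  | cons h w ih =>
    have hadj : htAdjLbl _ _ := h
    have := phi_lip l β τ (by omega) (by omega) ((hypertree l).adj_symm hadj)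
    rw [SimpleGraph.Walk.length_cons]
    omega

lemma exists_walk_root (l : ℕ) (h0 : 0 < 2 ^ l - 1) :
    ∀ v : ℕ, (hv : v < 2 ^ l - 1) →
    ∃ w : (hypertree l).Walk ⟨0, h0⟩ ⟨v, hv⟩, w.length = Nat.log 2 (v + 1) := by
  intro v
  induction v using Nat.strong_induction_on with
  | _ v ih =>
  intro hv
  rcases Nat.eq_zero_or_pos v with h | h
  · subst h
    exact ⟨SimpleGraph.Walk.nil, by simp⟩
  · have hp : (v + 1) / 2 - 1 < 2 ^ l - 1 := by omega
    have hadj : (hypertree l).Adj ⟨(v + 1) / 2 - 1, hp⟩ ⟨v, hv⟩ := by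
      show htAdjLbl ((v + 1) / 2 - 1 + 1) (v + 1)
      rw [htAdjLbl_def]
      left
      omega
    obtain ⟨w, hw⟩ := ih ((v + 1) / 2 - 1) (by omega) hp
    refine ⟨w.concat hadj, ?_⟩
    rw [SimpleGraph.Walk.length_concat, hw]
    have h2 : (v + 1) / 2 - 1 + 1 = (v + 1) / 2 := by omega
    rw [h2]
    have := log2_child (a := (v+1)/2) (d := (v+1) % 2) (by omega) (by omega)
    rw [show 2 * ((v+1)/2) + (v+1) % 2 = v + 1 by omega] at this
    omega

lemma target_phi (l : ℕ) (hl : 3 ≤ l) (τ β : ℕ) (hτ : τ ≤ 1) (hβ : β ≤ 1) :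
    1 ≤ 2 ^ (l-1) + τ * 2 ^ (l-2) + β * (2 ^ (l-2) - 1) ∧
    2 ^ (l-1) + τ * 2 ^ (l-2) + β * (2 ^ (l-2) - 1) ≤ 2 ^ l - 1 ∧
    Phi l β τ (2 ^ (l-1) + τ * 2 ^ (l-2) + β * (2 ^ (l-2) - 1)) = 0 := by
  set P : ℕ := 2 ^ (l - 2) with hP
  have hP2 : 2 ≤ P := by
    rw [hP]
    calc (2:ℕ) = 2 ^ 1 := rfl
    _ ≤ 2 ^ (l-2) := Nat.pow_le_pow_right (by norm_num) (by omega)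
  have h2P : (2:ℕ) ^ (l-1) = 2 * P := by
    rw [hP, ← pow_succ']; congr 1; omega
  have h4P : (2:ℕ) ^ l = 4 * P := by
    have h' : (2:ℕ) ^ l = 2 ^ (l-1) * 2 := by rw [← pow_succ]; congr 1; omega
    rw [h', h2P]; ring
  set y : ℕ := 2 ^ (l-1) + τ * 2 ^ (l-2) + β * (2 ^ (l-2) - 1) with hy
  have hylb : 2 * P ≤ y := by rw [hy, h2P]; omega
  have hyub : y ≤ 4 * P - 1 := by
    have h1 : τ * P ≤ 1 * P := Nat.mul_le_mul_right P hτ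
    have h2 : β * (P - 1) ≤ 1 * (P - 1) := Nat.mul_le_mul_right _ hβ
    rw [hy, h2P, ← hP]; omega
  have hlog : Nat.log 2 y = l - 1 := by
    apply Nat.log_eq_of_pow_le_of_lt_pow
    · rw [h2P]; omega
    · rw [show l - 1 + 1 = l by omega, h4P]; omega
  refine ⟨by omega, by omega, ?_⟩
  have hrem : β * (P - 1) < P := by
    have h2 : β * (P - 1) ≤ 1 * (P - 1) := Nat.mul_le_mul_right _ hβ
    omega
  have hyeq : y = β * (P - 1) + P * (2 + τ) := by
    have h' : P * (2 + τ) = 2 * P + τ * P := by ring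
    rw [hy, h2P, ← hP]; omega
  have hmody : y % P = β * (P - 1) := by
    rw [hyeq, Nat.add_mul_mod_self_left, Nat.mod_eq_of_lt hrem]
  have hdivy : y / P = 2 + τ := by
    rw [hyeq, Nat.add_mul_div_left _ _ (by omega : 0 < P), Nat.div_eq_of_lt hrem]
    omega
  have hstrip : strip y = 2 ^ (l-2) * (1 + β) - β := by
    rw [strip, hlog, show l - 1 - 1 = l - 2 by omega, ← hP, hmody]
    interval_cases β <;> omega
  have hsg : sg y = τ := by
    rw [sg, hlog, show l - 1 - 1 = l - 2 by omega, ← hP, hdivy]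
    omega
  rw [Phi, hstrip, Gf_spine l β (l-2) hβ, chi, if_neg (by omega : ¬ y = 1), hsg,
    if_pos rfl]
  omega

lemma center_phi (l : ℕ) (hl : 3 ≤ l) (a : ℕ) (ha : 1 ≤ a) :
    l - 1 ≤ Phi l (1 - (a / 2 ^ (Nat.log 2 a - 2) % 2)) (1 - sg a) a := by
  set t : ℕ := a / 2 ^ (Nat.log 2 a - 2) % 2 with ht
  set β : ℕ := 1 - t with hβ
  set τ : ℕ := 1 - sg a with hτ
  have ht1 : t ≤ 1 := by omega
  have hchi : chi τ a = 1 := by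
    have hsla : sg a ≤ 1 := by rw [sg]; omega
    rw [chi]
    split
    · rfl
    · rw [if_neg (by omega)]
  have hGf : l - 2 ≤ Gf l β (strip a) := by
    rcases Nat.lt_or_ge (Nat.log 2 a) 2 with hm | hm
    · have h1 : strip a = 1 := by
        rw [strip, show Nat.log 2 a - 1 = 0 by omega]
        simp [Nat.mod_one]
      rw [h1, Gf_base l β 1 le_rfl]
    · set m := Nat.log 2 a with hm'
      have hQ : (1:ℕ) ≤ 2 ^ (m-2) := Nat.one_le_two_pow
      have hsplit : (2:ℕ) ^ (m-1) = 2 ^ (m-2) * 2 := by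
        rw [← pow_succ]; congr 1; omega
      have hr : a % 2 ^ (m-1) < 2 ^ (m-1) := Nat.mod_lt _ (by positivity)
      have hlogs : Nat.log 2 (strip a) = m - 1 := by
        apply Nat.log_eq_of_pow_le_of_lt_pow
        · rw [strip, ← hm']; omega
        · rw [strip, ← hm', pow_succ]; omega
      have hx2 : 2 ≤ strip a := by
        have h2 : (2:ℕ) ≤ 2 ^ (m-1) := by
          calc (2:ℕ) = 2 ^ 1 := rfl
          _ ≤ 2 ^ (m-1) := Nat.pow_le_pow_right (by norm_num) (by omega)
        rw [strip, ← hm']; omega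
      have hdiv : strip a / 2 ^ (m-2) = a / 2 ^ (m-2) % 2 + 2 := by
        rw [strip, ← hm', hsplit, Nat.add_mul_div_left _ _ (by omega : 0 < 2 ^ (m-2)),
          Nat.mod_mul_right_div_self]
      have hbit : strip a / 2 ^ (Nat.log 2 (strip a) - 1) % 2 = t := by
        rw [hlogs, show m - 1 - 1 = m - 2 by omega, hdiv]
        omega
      have hoff := Gf_offspine l β (strip a) hx2 (by rw [hbit]; omega)
      rw [hoff, hlogs]
      omega
  rw [Phi, hchi]
  omega

end HTAux

open HTAux in
theorem dil_star_hypertree (l n : ℕ) (hl : 3 ≤ l) (hn : n = 2 ^ l - 1) :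
    (∀ f : Fin n ≃ Fin (2 ^ l - 1), ∃ u v : Fin n, (_root_.starGraph n).Adj u v ∧
      l - 1 ≤ (hypertree l).dist (f u) (f v)) ∧
    (∃ f : Fin n ≃ Fin (2 ^ l - 1), ∀ u v : Fin n, (_root_.starGraph n).Adj u v →
      (hypertree l).dist (f u) (f v) ≤ l - 1) := by
  subst hn
  have h8 : (8:ℕ) ≤ 2 ^ l := by
    calc (8:ℕ) = 2 ^ 3 := rfl
    _ ≤ 2 ^ l := Nat.pow_le_pow_right (by norm_num) hl
  have h0 : 0 < 2 ^ l - 1 := by omega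
  constructor
  · intro f
    set z : Fin (2 ^ l - 1) := ⟨0, h0⟩ with hz
    set c : Fin (2 ^ l - 1) := f z with hc
    set a : ℕ := c.val + 1 with ha
    set t : ℕ := a / 2 ^ (Nat.log 2 a - 2) % 2 with ht
    set β : ℕ := 1 - t with hβ
    set τ : ℕ := 1 - sg a with hτ
    have hτ1 : τ ≤ 1 := by omega
    have hβ1 : β ≤ 1 := by omega
    obtain ⟨hy1, hy2, hyPhi⟩ := target_phi l hl τ β hτ1 hβ1
    set y : ℕ := 2 ^ (l-1) + τ * 2 ^ (l-2) + β * (2 ^ (l-2) - 1) with hy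
    have hyv : y - 1 < 2 ^ l - 1 := by omega
    set vy : Fin (2 ^ l - 1) := ⟨y - 1, hyv⟩ with hvy
    have hvyl : vy.val + 1 = y := by simp only [hvy]; omega
    -- reachability
    obtain ⟨w1, -⟩ := exists_walk_root l h0 c.val c.isLt
    obtain ⟨w2, -⟩ := exists_walk_root l h0 vy.val vy.isLt
    have hreach : (hypertree l).Reachable c vy := by
      exact ⟨w1.reverse.append w2⟩
    obtain ⟨p, hp⟩ := hreach.exists_walk_length_eq_dist
    have hwalk := phi_walk l β τ p
    rw [hvyl, hyPhi, hp] at hwalk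
    have hcphi := center_phi l hl a (by omega)
    rw [← ht, ← hβ, ← hτ] at hcphi
    have hdist : l - 1 ≤ (hypertree l).dist c vy := by
      rw [← ha] at hwalk; omega
    have hne : c ≠ vy := by
      intro h
      rw [h, SimpleGraph.dist_self] at hdist
      omega
    refine ⟨z, f.symm vy, ⟨?_, Or.inl rfl⟩, ?_⟩
    · intro h
      exact hne (by rw [hc, h, Equiv.apply_symm_apply])
    · rw [Equiv.apply_symm_apply, ← hc]
      exact hdist
  · refine ⟨Equiv.refl _, ?_⟩
    intro u v huv
    obtain ⟨hne, h0v | h0v⟩ := huv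
    · have hu : u = ⟨0, h0⟩ := Fin.ext h0v
      obtain ⟨w, hw⟩ := exists_walk_root l h0 v.val v.isLt
      have hd : (hypertree l).dist u v ≤ w.length := by
        rw [hu]
        exact SimpleGraph.dist_le w
      have hlog : Nat.log 2 (v.val + 1) < l :=
        Nat.log_lt_of_lt_pow (by omega) (by omega)
      simpa using le_trans hd (by omega)
    · have hv : v = ⟨0, h0⟩ := Fin.ext h0v
      obtain ⟨w, hw⟩ := exists_walk_root l h0 u.val u.isLt
      have hd : (hypertree l).dist v u ≤ w.length := by
        rw [hv]
        exact SimpleGraph.dist_le w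
      have hlog : Nat.log 2 (u.val + 1) < l :=
        Nat.log_lt_of_lt_pow (by omega) (by omega)
      have := (hypertree l).dist_comm (u := u) (v := v)
      simp only [Equiv.refl_apply]
      omega
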